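/- Let V be a finite-dimensional real vector space and B ∈ Λ²V* a real alternating bilinear form. Define e^B : 𝕋_ℂV → 𝕋_ℂV by e^B(X + ξ) = X + ξ + B̃(X, ·), where B̃ is the ℂ-bilinear extension of B. Then e^B preserves the pairing of 𝕋_ℂV and commutes with conjugation; consequently, if L ⊆ 𝕋_ℂV is lagrangian then e^B(L) is lagrangian with pr_{V_ℂ}(e^B L) = pr_{V_ℂ}(L), the real part of e^B L ∩ conj(e^B L) equals e^B(K) for K the real part of L ∩ L̄, and e^B L has the same real index, order, and type as L; moreover ε(e^B L) = ε(L) + B̃|_E, so Im(ε|_{Δ×Δ}) is also unchanged. -/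

import Mathlib

open TensorProduct Module

noncomputable section

namespace CDirac


/-- The real generalized tangent space `V ⊕ V*`. -/
abbrev TR (V : Type*) [AddCommGroup V] [Module ℝ V] := V × (V →ₗ[ℝ] ℝ)

variable {V : Type*} [AddCommGroup V] [Module ℝ V]

/-- The canonical pairing `⟨X+ξ, Y+η⟩ = (η X + ξ Y)/2` on `𝕋V`. -/
def pairR (a b : TR V) : ℝ := (b.2 a.1 + a.2 b.1) / 2

lemma pairR_add_left (a a' b : TR V) : pairR (a + a') b = pairR a b + pairR a' b := by
  simp only [pairR, Prod.fst_add, Prod.snd_add, map_add, LinearMap.add_apply]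
  ring

lemma pairR_smul_left (c : ℝ) (a b : TR V) : pairR (c • a) b = c * pairR a b := by
  simp only [pairR, Prod.smul_fst, Prod.smul_snd, map_smul, LinearMap.smul_apply,
    smul_eq_mul]
  ring

/-- Orthogonal complement with respect to the pairing on `𝕋V`. -/
def orthR (L : Submodule ℝ (TR V)) : Submodule ℝ (TR V) where
  carrier := {a | ∀ b ∈ L, pairR a b = 0}
  zero_mem' := fun b _ => by simp [pairR]
  add_mem' := fun {a a'} ha ha' b hb => by
    rw [pairR_add_left, ha b hb, ha' b hb, add_zero]
  smul_mem' := fun c a ha b hb => by rw [pairR_smul_left, ha b hb, mul_zero]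

/-- A real lagrangian subspace: `L = L^⊥`. -/
def IsLagrangianR (L : Submodule ℝ (TR V)) : Prop := L = orthR L

/-- An isotropic subspace of `𝕋V`. -/
def IsIsotropicR (K : Submodule ℝ (TR V)) : Prop := ∀ a ∈ K, ∀ b ∈ K, pairR a b = 0

instance (K : Submodule ℝ (TR V)) : AddCommGroup ↥K := Submodule.addCommGroup K

/-- The quotient `K^⊥/K`. -/
abbrev quotK (K : Submodule ℝ (TR V)) := ↥(orthR K) ⧸ (K.comap (orthR K).subtype)

/-- The quotient map `K^⊥ → K^⊥/K`. -/
def mkK (K : Submodule ℝ (TR V)) : ↥(orthR K) →ₗ[ℝ] quotK K :=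
  (K.comap (orthR K).subtype).mkQ




/-- The complexification `V_ℂ = ℂ ⊗_ℝ V`. -/
abbrev Cx (V : Type*) [AddCommGroup V] [Module ℝ V] := ℂ ⊗[ℝ] V

/-- The complex dual `(V_ℂ)^*`. -/
abbrev DualC (V : Type*) [AddCommGroup V] [Module ℝ V] := Cx V →ₗ[ℂ] ℂ

/-- The complexified generalized tangent space `𝕋_ℂ V = V_ℂ ⊕ (V_ℂ)^*`. -/
abbrev TCx (V : Type*) [AddCommGroup V] [Module ℝ V] := Cx V × DualC V

/-- The ℂ-bilinear pairing on `𝕋_ℂ V`. -/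
def pairC (a b : TCx V) : ℂ := (b.2 a.1 + a.2 b.1) / 2

lemma pairC_add_left (a a' b : TCx V) : pairC (a + a') b = pairC a b + pairC a' b := by
  simp only [pairC, Prod.fst_add, Prod.snd_add, map_add, LinearMap.add_apply]
  ring

lemma pairC_smul_left (c : ℂ) (a b : TCx V) : pairC (c • a) b = c * pairC a b := by
  simp only [pairC, Prod.smul_fst, Prod.smul_snd, map_smul, LinearMap.smul_apply,
    smul_eq_mul]
  ring

/-- Orthogonal complement with respect to the ℂ-bilinear pairing on `𝕋_ℂ V`. -/
def orthC (L : Submodule ℂ (TCx V)) : Submodule ℂ (TCx V) where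
  carrier := {a | ∀ b ∈ L, pairC a b = 0}
  zero_mem' := fun b _ => by simp [pairC]
  add_mem' := fun {a a'} ha ha' b hb => by
    rw [pairC_add_left, ha b hb, ha' b hb, add_zero]
  smul_mem' := fun c a ha b hb => by rw [pairC_smul_left, ha b hb, mul_zero]

/-- A complex lagrangian subspace: `L = L^⊥`. -/
def IsLagrangianC (L : Submodule ℂ (TCx V)) : Prop := L = orthC L

private lemma conjCxAux_smul (z : ℂ) (x : Cx V) :
    TensorProduct.map Complex.conjAe.toLinearMap LinearMap.id (z • x) =
      starRingEnd ℂ z • TensorProduct.map Complex.conjAe.toLinearMap LinearMap.id x := by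
  induction x using TensorProduct.induction_on with
  | zero => simp
  | tmul w v => simp [smul_tmul', smul_eq_mul, Complex.conjAe_coe, map_mul]
  | add x y hx hy => simp only [smul_add, map_add, hx, hy]

/-- Conjugation on `V_ℂ`, as a `conj`-semilinear map. -/
def conjCx : Cx V →ₛₗ[starRingEnd ℂ] Cx V where
  toFun := TensorProduct.map Complex.conjAe.toLinearMap LinearMap.id
  map_add' := map_add _
  map_smul' := conjCxAux_smul

lemma conjCx_smul (z : ℂ) (x : Cx V) :
    conjCx (z • x) = starRingEnd ℂ z • conjCx x := conjCxAux_smul z x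

/-- Conjugation of a complex linear functional. -/
def conjDualFun (ξ : DualC V) : DualC V where
  toFun x := starRingEnd ℂ (ξ (conjCx x))
  map_add' x y := by simp
  map_smul' z x := by
    rw [conjCx_smul, map_smul, smul_eq_mul, map_mul, RingHom.id_apply]
    simp [smul_eq_mul]

/-- Conjugation on `(V_ℂ)^*`, as a `conj`-semilinear map. -/
def conjDual : DualC V →ₛₗ[starRingEnd ℂ] DualC V where
  toFun := conjDualFun
  map_add' ξ η := by ext x; simp [conjDualFun]
  map_smul' z ξ := by
    ext x
    simp [conjDualFun, smul_eq_mul, map_mul]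

/-- Conjugation on `𝕋_ℂ V`, as a `conj`-semilinear map. -/
def conjT : TCx V →ₛₗ[starRingEnd ℂ] TCx V where
  toFun a := (conjCx a.1, conjDual a.2)
  map_add' a b := by simp [Prod.ext_iff]
  map_smul' z a := by
    simp [Prod.ext_iff, Prod.smul_fst, Prod.smul_snd, map_smulₛₗ]

instance : RingHomSurjective (starRingEnd ℂ) :=
  ⟨fun z => ⟨starRingEnd ℂ z, by simp⟩⟩

/-- The conjugate `L̄` of a ℂ-subspace of `𝕋_ℂ V`. -/
def conjSub (L : Submodule ℂ (TCx V)) : Submodule ℂ (TCx V) := L.map conjT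

/-- The conjugate `Ē` of a ℂ-subspace of `V_ℂ`. -/
def conjE (E : Submodule ℂ (Cx V)) : Submodule ℂ (Cx V) := E.map conjCx

/-- The canonical inclusion `V → V_ℂ`, `v ↦ 1 ⊗ v`. -/
def iV : V →ₗ[ℝ] Cx V := TensorProduct.mk ℝ ℂ V 1





/-- ℝ-linear auxiliary version of the ℂ-linear extension of a real functional. -/
def dualExtAux (α : V →ₗ[ℝ] ℝ) : Cx V →ₗ[ℝ] ℂ :=
  TensorProduct.lift
    (LinearMap.mk₂ ℝ (fun z v => z * (α v : ℂ))
      (fun z w v => by push_cast; ring)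
      (fun r z v => by simp only [Complex.real_smul]; ring)
      (fun z v w => by push_cast [map_add]; ring)
      (fun r z v => by simp only [map_smul, smul_eq_mul, Complex.real_smul]; push_cast; ring))

private lemma dualExtAux_smulC (α : V →ₗ[ℝ] ℝ) (z : ℂ) (x : Cx V) :
    dualExtAux α (z • x) = z * dualExtAux α x := by
  induction x using TensorProduct.induction_on with
  | zero => simp
  | tmul w v =>
      simp only [dualExtAux, smul_tmul', lift.tmul, LinearMap.mk₂_apply, smul_eq_mul]
      ring
  | add x y hx hy => simp only [smul_add, map_add, hx, hy]; ring

/-- The ℂ-linear extension of a real functional `α : V → ℝ` to `V_ℂ`. -/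
def dualExtFun (α : V →ₗ[ℝ] ℝ) : DualC V where
  toFun := dualExtAux α
  map_add' := map_add _
  map_smul' z x := by simpa using dualExtAux_smulC α z x

private lemma dualExtFun_tmul (α : V →ₗ[ℝ] ℝ) (z : ℂ) (v : V) :
    dualExtFun α (z ⊗ₜ[ℝ] v) = z * (α v : ℂ) := by
  simp [dualExtFun, dualExtAux]

/-- The ℂ-linear extension map `V^* → (V_ℂ)^*`, as an ℝ-linear map. -/
def dualExt : (V →ₗ[ℝ] ℝ) →ₗ[ℝ] DualC V where
  toFun := dualExtFun
  map_add' α β := by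
    apply LinearMap.ext; intro x
    induction x using TensorProduct.induction_on with
    | zero => simp
    | tmul w v =>
        simp only [dualExtFun_tmul, LinearMap.add_apply]
        push_cast
        ring
    | add x y hx hy =>
        simp only [map_add, LinearMap.add_apply] at *
        rw [hx, hy]
  map_smul' r α := by
    apply LinearMap.ext; intro x
    induction x using TensorProduct.induction_on with
    | zero => simp
    | tmul w v =>
        simp only [dualExtFun_tmul, RingHom.id_apply, LinearMap.smul_apply,
          LinearMap.smul_apply, smul_eq_mul, Complex.real_smul]
        push_cast
        ring
    | add x y hx hy =>
        simp only [map_add, RingHom.id_apply, LinearMap.smul_apply, smul_eq_mul] at *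
        rw [hx, hy]

/-- The canonical inclusion `𝕋V → 𝕋_ℂV`. -/
def iT : TR V →ₗ[ℝ] TCx V where
  toFun a := (iV a.1, dualExt a.2)
  map_add' a b := by simp [Prod.ext_iff]
  map_smul' r a := by simp [Prod.ext_iff]



/-- Auxiliary ℝ-linear version of the ℂ-bilinear extension of a real bilinear form. -/
def bilinExtAux (B : V →ₗ[ℝ] V →ₗ[ℝ] ℝ) : Cx V →ₗ[ℝ] DualC V :=
  TensorProduct.lift
    (LinearMap.mk₂ ℝ (fun z v => z • dualExt (B v))
      (fun z w v => by simp only [add_smul])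
      (fun r z v => by simp only [smul_assoc])
      (fun z v w => by simp only [map_add, smul_add])
      (fun r z v => by simp only [map_smul]; exact smul_comm z r _))

private lemma bilinExtAux_smulC (B : V →ₗ[ℝ] V →ₗ[ℝ] ℝ) (z : ℂ) (x : Cx V) :
    bilinExtAux B (z • x) = z • bilinExtAux B x := by
  induction x using TensorProduct.induction_on with
  | zero => simp
  | tmul w v =>
      simp only [bilinExtAux, smul_tmul', lift.tmul, LinearMap.mk₂_apply, smul_eq_mul,
        mul_smul]
  | add x y hx hy => simp only [smul_add, map_add, hx, hy]

/-- The ℂ-bilinear extension of a real bilinear form `B : V × V → ℝ` to `V_ℂ`. -/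
def bilinExt (B : V →ₗ[ℝ] V →ₗ[ℝ] ℝ) : Cx V →ₗ[ℂ] DualC V where
  toFun := bilinExtAux B
  map_add' := map_add _
  map_smul' z x := by simpa using bilinExtAux_smulC B z x

/-- The `B`-transformation `e^B(X+ξ) = X + ξ + B̃(X,·)` of `𝕋_ℂV`, for a real `B`. -/
def eB (B : V →ₗ[ℝ] V →ₗ[ℝ] ℝ) : TCx V →ₗ[ℂ] TCx V where
  toFun a := (a.1, a.2 + bilinExt B a.1)
  map_add' a b := by
    simp only [Prod.fst_add, Prod.snd_add, map_add, Prod.mk_add_mk, Prod.mk.injEq]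
    exact ⟨trivial, by abel⟩
  map_smul' z a := by
    simp only [Prod.smul_fst, Prod.smul_snd, map_smul, RingHom.id_apply, Prod.smul_mk,
      Prod.mk.injEq, smul_add]

/-- The real `B`-transformation `e^B(X+α) = X + α + B(X,·)` of `𝕋V`. -/
def eBR (B : V →ₗ[ℝ] V →ₗ[ℝ] ℝ) : TR V →ₗ[ℝ] TR V where
  toFun a := (a.1, a.2 + B a.1)
  map_add' a b := by
    simp only [Prod.fst_add, Prod.snd_add, map_add, Prod.mk_add_mk, Prod.mk.injEq]
    exact ⟨trivial, by abel⟩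
  map_smul' r a := by
    simp only [Prod.smul_fst, Prod.smul_snd, map_smul, RingHom.id_apply, Prod.smul_mk,
      Prod.mk.injEq, smul_add]


/-- The range `E = pr_{V_ℂ}(L)` of a subspace of `𝕋_ℂV`. -/
def Esub (L : Submodule ℂ (TCx V)) : Submodule ℂ (Cx V) :=
  L.map (LinearMap.fst ℂ (Cx V) (DualC V))

/-- The real index `r = dim_ℂ (L ∩ L̄)`. -/
def riL (L : Submodule ℂ (TCx V)) : ℕ := finrank ℂ ↥(L ⊓ conjSub L)

/-- The real part `K = (L ∩ L̄) ∩ 𝕋V`, as a subspace of `𝕋V`. -/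
def Ksub (L : Submodule ℂ (TCx V)) : Submodule ℝ (TR V) :=
  ((L ⊓ conjSub L).restrictScalars ℝ).comap iT

/-- The distribution `D = (E + Ē) ∩ V`, as a subspace of `V`. -/
def Dsub (L : Submodule ℂ (TCx V)) : Submodule ℝ V :=
  ((Esub L ⊔ conjE (Esub L)).restrictScalars ℝ).comap iV

/-- The distribution `Δ = (E ∩ Ē) ∩ V`, as a subspace of `V`. -/
def DeltaSub (L : Submodule ℂ (TCx V)) : Submodule ℝ V :=
  ((Esub L ⊓ conjE (Esub L)).restrictScalars ℝ).comap iV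

/-- The order `s = dim V - dim D`. -/
def orderL (L : Submodule ℂ (TCx V)) : ℕ := finrank ℝ V - finrank ℝ ↥(Dsub L)

/-- The (normalized) type `k = dim_ℂ(E + Ē) - dim_ℂ E`. -/
def typeL (L : Submodule ℂ (TCx V)) : ℕ :=
  finrank ℂ ↥(Esub L ⊔ conjE (Esub L)) - finrank ℂ ↥(Esub L)


/-! ### Auxiliary lemmas for statement 11 -/

section Aux

variable (B : V →ₗ[ℝ] V →ₗ[ℝ] ℝ)

lemma my_conjCx_tmul (z : ℂ) (v : V) :
    conjCx (z ⊗ₜ[ℝ] v) = (starRingEnd ℂ z) ⊗ₜ[ℝ] v := by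
  simp [conjCx, Complex.conjAe_coe]

lemma my_bilinExt_tmul (z : ℂ) (v : V) :
    bilinExt B (z ⊗ₜ[ℝ] v) = z • dualExt (B v) := by
  simp [bilinExt, bilinExtAux, dualExt]

lemma my_eB_fst (a : TCx V) : (eB B a).1 = a.1 := rfl

lemma my_eB_snd (a : TCx V) : (eB B a).2 = a.2 + bilinExt B a.1 := rfl

lemma my_eBR_fst (a : TR V) : (eBR B a).1 = a.1 := rfl

lemma my_eBR_snd (a : TR V) : (eBR B a).2 = a.2 + B a.1 := rfl

lemma my_eB_eB (B' : V →ₗ[ℝ] V →ₗ[ℝ] ℝ) (a : TCx V) :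
    eB B (eB B' a) = (a.1, a.2 + bilinExt B' a.1 + bilinExt B a.1) := rfl

lemma my_bilinExt_neg (x : Cx V) : bilinExt (-B) x = - bilinExt B x := by
  induction x using TensorProduct.induction_on with
  | zero => simp
  | tmul z v =>
      rw [my_bilinExt_tmul, my_bilinExt_tmul]
      simp only [LinearMap.neg_apply, map_neg, smul_neg]
  | add x y hx hy => simp only [map_add, hx, hy]; abel

lemma my_eB_neg_eB (a : TCx V) : eB (-B) (eB B a) = a := by
  rw [my_eB_eB, my_bilinExt_neg]
  ext <;> simp

lemma my_eB_eB_neg (a : TCx V) : eB B (eB (-B) a) = a := by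
  rw [my_eB_eB, my_bilinExt_neg]
  ext <;> simp

lemma my_eBR_eBR_neg (a : TR V) : eBR B (eBR (-B) a) = a := by
  refine Prod.ext rfl ?_
  show a.2 + (-B) a.1 + B a.1 = a.2
  simp

lemma my_dualExt_tmul (α : V →ₗ[ℝ] ℝ) (z : ℂ) (v : V) :
    dualExt α (z ⊗ₜ[ℝ] v) = z * (α v : ℂ) := dualExtFun_tmul α z v

lemma my_Bsym (hBalt : ∀ v : V, B v v = 0) (u v : V) : B u v + B v u = 0 := by
  have h := hBalt (u + v)
  simp only [map_add, LinearMap.add_apply, hBalt] at h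
  linarith

lemma my_bilinExt_symm (hBalt : ∀ v : V, B v v = 0) (x y : Cx V) :
    bilinExt B x y + bilinExt B y x = 0 := by
  induction x using TensorProduct.induction_on with
  | zero => simp
  | tmul z u =>
      induction y using TensorProduct.induction_on with
      | zero => simp
      | tmul w v =>
          rw [my_bilinExt_tmul, my_bilinExt_tmul]
          simp only [LinearMap.smul_apply, smul_eq_mul]
          rw [my_dualExt_tmul, my_dualExt_tmul]
          have h := my_Bsym B hBalt u v
          have : ((B u v : ℂ) + (B v u : ℂ)) = 0 := by
            rw [← Complex.ofReal_add, h, Complex.ofReal_zero]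
          linear_combination z * w * this
      | add y₁ y₂ hy₁ hy₂ =>
          simp only [map_add, LinearMap.add_apply] at *
          linear_combination hy₁ + hy₂
  | add x₁ x₂ hx₁ hx₂ =>
      simp only [map_add, LinearMap.add_apply] at *
      linear_combination hx₁ + hx₂

lemma my_pairC_eB (hBalt : ∀ v : V, B v v = 0) (a b : TCx V) :
    pairC (eB B a) (eB B b) = pairC a b := by
  simp only [pairC, my_eB_fst, my_eB_snd, LinearMap.add_apply]
  have h := my_bilinExt_symm B hBalt a.1 b.1
  linear_combination h / 2

lemma my_conjDual_dualExt (α : V →ₗ[ℝ] ℝ) :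
    conjDual (dualExt α) = dualExt α := by
  apply LinearMap.ext
  intro x
  show starRingEnd ℂ (dualExt α (conjCx x)) = dualExt α x
  induction x using TensorProduct.induction_on with
  | zero => simp
  | tmul z v =>
      rw [my_conjCx_tmul, my_dualExt_tmul, my_dualExt_tmul, map_mul]
      simp
  | add x y hx hy =>
      simp only [map_add, hx, hy]

lemma my_conjDual_bilinExt (x : Cx V) :
    conjDual (bilinExt B x) = bilinExt B (conjCx x) := by
  induction x using TensorProduct.induction_on with
  | zero => simp
  | tmul z v =>
      rw [my_bilinExt_tmul, my_conjCx_tmul, my_bilinExt_tmul,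
        conjDual.map_smulₛₗ, my_conjDual_dualExt]
  | add x y hx hy =>
      simp only [map_add, hx, hy]

lemma my_conjT_eB (a : TCx V) : conjT (eB B a) = eB B (conjT a) := by
  have h2 : conjDual ((eB B a).2) = (conjT a).2 + bilinExt B (conjT a).1 := by
    rw [my_eB_snd, map_add, my_conjDual_bilinExt]
    rfl
  exact Prod.ext rfl h2

lemma my_bilinExt_real (u v : V) : (bilinExt B (iV u) (iV v)).im = 0 := by
  show (bilinExt B ((1 : ℂ) ⊗ₜ[ℝ] u) ((1 : ℂ) ⊗ₜ[ℝ] v)).im = 0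
  rw [my_bilinExt_tmul]
  simp only [LinearMap.smul_apply, one_smul]
  rw [my_dualExt_tmul]
  simp

lemma my_mem_map_eB (L : Submodule ℂ (TCx V)) (a : TCx V) :
    a ∈ L.map (eB B) ↔ eB (-B) a ∈ L := by
  constructor
  · rintro ⟨b, hb, rfl⟩; rwa [my_eB_neg_eB]
  · intro h; exact ⟨eB (-B) a, h, my_eB_eB_neg B a⟩

lemma my_orthC_map (hBalt : ∀ v : V, B v v = 0) (L : Submodule ℂ (TCx V)) :
    orthC (L.map (eB B)) = (orthC L).map (eB B) := by
  ext a
  constructor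
  · intro h
    refine ⟨eB (-B) a, fun b hb => ?_, my_eB_eB_neg B a⟩
    have := h (eB B b) ⟨b, hb, rfl⟩
    rwa [show pairC a (eB B b) = pairC (eB B (eB (-B) a)) (eB B b) by
          rw [my_eB_eB_neg],
        my_pairC_eB B hBalt] at this
  · rintro ⟨a', ha', rfl⟩ b ⟨b', hb', rfl⟩
    rw [my_pairC_eB B hBalt]
    exact ha' b' hb'

lemma my_Esub_map (L : Submodule ℂ (TCx V)) : Esub (L.map (eB B)) = Esub L := by
  ext x
  simp only [Esub, Submodule.mem_map, LinearMap.fst_apply]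
  constructor
  · rintro ⟨a, ⟨b, hb, rfl⟩, rfl⟩; exact ⟨b, hb, rfl⟩
  · rintro ⟨b, hb, rfl⟩; exact ⟨eB B b, ⟨b, hb, rfl⟩, rfl⟩

lemma my_conjSub_map (L : Submodule ℂ (TCx V)) :
    conjSub (L.map (eB B)) = (conjSub L).map (eB B) := by
  ext x
  constructor
  · rintro ⟨a, ⟨b, hb, rfl⟩, rfl⟩
    exact ⟨conjT b, ⟨b, hb, rfl⟩, (my_conjT_eB B b).symm⟩
  · rintro ⟨a, ⟨b, hb, rfl⟩, rfl⟩
    exact ⟨eB B b, ⟨b, hb, rfl⟩, my_conjT_eB B b⟩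

/-- `e^B` as a linear equivalence. -/
def eBequiv : TCx V ≃ₗ[ℂ] TCx V :=
  LinearEquiv.ofLinear (eB B) (eB (-B))
    (LinearMap.ext (my_eB_eB_neg B)) (LinearMap.ext (my_eB_neg_eB B))

lemma my_eB_injective : Function.Injective (eB B) := by
  intro a b h
  have := congrArg (eB (-B)) h
  rwa [my_eB_neg_eB, my_eB_neg_eB] at this

lemma my_inter_map (L : Submodule ℂ (TCx V)) :
    L.map (eB B) ⊓ conjSub (L.map (eB B)) = (L ⊓ conjSub L).map (eB B) := by
  rw [my_conjSub_map, Submodule.map_inf _ (my_eB_injective B)]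

lemma my_iT_eBR (a : TR V) : iT (eBR B a) = eB B (iT a) := by
  refine Prod.ext rfl ?_
  show dualExt (a.2 + B a.1) = dualExt a.2 + bilinExt B (iV a.1)
  rw [map_add]
  congr 1
  show dualExt (B a.1) = bilinExt B ((1 : ℂ) ⊗ₜ[ℝ] a.1)
  rw [my_bilinExt_tmul, one_smul]

lemma my_Ksub_map (L : Submodule ℂ (TCx V)) :
    Ksub (L.map (eB B)) = (Ksub L).map (eBR B) := by
  unfold Ksub
  rw [my_inter_map]
  ext x
  simp only [Submodule.mem_comap, Submodule.mem_map, Submodule.restrictScalars_mem]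
  constructor
  · rintro ⟨m, hm, hme⟩
    refine ⟨eBR (-B) x, ?_, my_eBR_eBR_neg B x⟩
    have : iT (eBR (-B) x) = m := by
      rw [my_iT_eBR, ← hme, my_eB_neg_eB]
    rwa [this]
  · rintro ⟨k, hk, rfl⟩
    exact ⟨iT k, hk, (my_iT_eBR B k).symm⟩

lemma my_riL_map (L : Submodule ℂ (TCx V)) : riL (L.map (eB B)) = riL L := by
  unfold riL
  rw [my_inter_map]
  exact LinearEquiv.finrank_map_eq (eBequiv B) _

end Aux

end CDirac

open CDirac Module

/-- A real `B`-transformation `e^B` preserves the pairing of `𝕋_ℂV`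
and commutes with conjugation; for lagrangian `L`, `e^B L` is lagrangian with the same
range `E`, real part `e^B K`, real index, order and type, and `ε(e^B L) = ε(L) + B̃|_E`,
while `B̃` is real (so `Im ε|_{Δ×Δ}` is unchanged). -/
theorem stmt11 (V : Type*) [AddCommGroup V] [Module ℝ V] [FiniteDimensional ℝ V]
    (B : V →ₗ[ℝ] V →ₗ[ℝ] ℝ) (hBalt : ∀ v : V, B v v = 0) :
    (∀ a b : TCx V, pairC (eB B a) (eB B b) = pairC a b) ∧
    (∀ a : TCx V, conjT (eB B a) = eB B (conjT a)) ∧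
    (∀ u v : V, (bilinExt B (iV u) (iV v)).im = 0) ∧
    ∀ L : Submodule ℂ (TCx V), IsLagrangianC L →
      (IsLagrangianC (L.map (eB B)) ∧
       Esub (L.map (eB B)) = Esub L ∧
       Ksub (L.map (eB B)) = (Ksub L).map (eBR B) ∧
       riL (L.map (eB B)) = riL L ∧
       orderL (L.map (eB B)) = orderL L ∧
       typeL (L.map (eB B)) = typeL L ∧
       ∀ (E : Submodule ℂ (Cx V)), E = Esub L →
         ∀ ε : ↥E →ₗ[ℂ] ↥E →ₗ[ℂ] ℂ,
         (∀ a : TCx V, a ∈ L ↔ ∃ h : a.1 ∈ E, ∀ y : ↥E, a.2 ↑y = ε ⟨a.1, h⟩ y) →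
         ∀ a : TCx V, a ∈ L.map (eB B) ↔
           ∃ h : a.1 ∈ E, ∀ y : ↥E, a.2 ↑y = ε ⟨a.1, h⟩ y + bilinExt B a.1 ↑y) := by
  refine ⟨my_pairC_eB B hBalt, my_conjT_eB B, my_bilinExt_real B, fun L hL => ?_⟩
  refine ⟨?_, my_Esub_map B L, my_Ksub_map B L, my_riL_map B L, ?_, ?_, ?_⟩
  · show L.map (eB B) = orthC (L.map (eB B))
    rw [my_orthC_map B hBalt, ← hL]
  · unfold orderL Dsub
    rw [my_Esub_map]
  · unfold typeL
    rw [my_Esub_map]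
  · intro E hE ε hchar a
    rw [my_mem_map_eB, hchar]
    constructor
    · rintro ⟨h, hy⟩
      refine ⟨h, fun y => ?_⟩
      have := hy y
      rw [show (eB (-B) a).2 = a.2 + bilinExt (-B) a.1 from rfl,
        my_bilinExt_neg,
        show (ε ⟨(eB (-B) a).1, h⟩ : ↥E →ₗ[ℂ] ℂ) = ε ⟨a.1, h⟩ from rfl] at this
      simp only [LinearMap.add_apply, LinearMap.neg_apply] at this
      linear_combination this
    · rintro ⟨h, hy⟩
      refine ⟨h, fun y => ?_⟩
      have := hy y
      rw [show (eB (-B) a).2 = a.2 + bilinExt (-B) a.1 from rfl,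
        my_bilinExt_neg,
        show (ε ⟨(eB (-B) a).1, h⟩ : ↥E →ₗ[ℂ] ℂ) = ε ⟨a.1, h⟩ from rfl]
      simp only [LinearMap.add_apply, LinearMap.neg_apply]
      linear_combination this
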